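/- arXiv:2310.09900 — 4 statements merged into one kernel-verified Lean document; each statement's English description precedes it below -/
import Mathlib

section
/- The n-th Catalan number is odd if and only if n = 2^k - 1 for some natural number k. -/
open Finset

private lemma catalan_odd_aux_odd (m : ℕ) :
    (catalan (2 * m + 1) : ZMod 2) = (catalan m : ZMod 2) ^ 2 := by
  have hmem : ((m, m) : ℕ × ℕ) ∈ Finset.HasAntidiagonal.antidiagonal (2 * m) := by
    simp [Finset.HasAntidiagonal.mem_antidiagonal]; ring
  have h := catalan_succ' (2 * m)
  have : (catalan (2 * m + 1) : ZMod 2) =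
      ∑ ij ∈ Finset.HasAntidiagonal.antidiagonal (2 * m), (catalan ij.1 : ZMod 2) * catalan ij.2 := by
    rw [h]; push_cast; rfl
  rw [this, ← Finset.add_sum_erase _ _ hmem]
  have hz : ∑ ij ∈ (Finset.HasAntidiagonal.antidiagonal (2 * m)).erase (m, m),
      (catalan ij.1 : ZMod 2) * catalan ij.2 = 0 := by
    apply Finset.sum_involution (g := fun ij _ => (ij.2, ij.1))
    · intro a _
      simp only [mul_comm]
      exact CharTwo.add_self_eq_zero _
    · intro a ha _
      intro hga
      have h1 : a.1 = a.2 := by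
        have := congrArg Prod.fst hga; simpa using this.symm
      have h2 : a.1 + a.2 = 2 * m := by
        have := Finset.mem_of_mem_erase ha
        simpa [Finset.HasAntidiagonal.mem_antidiagonal] using this
      have : a = (m, m) := by
        have : a.1 = m := by omega
        have h2' : a.2 = m := by omega
        exact Prod.ext ‹a.1 = m› h2'
      exact (Finset.ne_of_mem_erase ha) this
    · intro a ha
      refine Finset.mem_erase.2 ⟨?_, ?_⟩
      · intro hc
        have h1 : a.2 = m := by have := congrArg Prod.fst hc; simpa using this
        have h2 : a.1 = m := by have := congrArg Prod.snd hc; simpa using this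
        exact (Finset.ne_of_mem_erase ha) (Prod.ext h2 h1)
      · have := Finset.mem_of_mem_erase ha
        simp only [Finset.HasAntidiagonal.mem_antidiagonal] at this ⊢
        omega
    · intro a ha; rfl
  rw [hz, add_zero, sq]

private lemma catalan_odd_aux_even (m : ℕ) :
    (catalan (2 * m + 2) : ZMod 2) = 0 := by
  have h := catalan_succ' (2 * m + 1)
  have hcast : (catalan (2 * m + 2) : ZMod 2) =
      ∑ ij ∈ Finset.HasAntidiagonal.antidiagonal (2 * m + 1), (catalan ij.1 : ZMod 2) * catalan ij.2 := by
    rw [h]; push_cast; rfl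
  rw [hcast]
  apply Finset.sum_involution (g := fun ij _ => (ij.2, ij.1))
  · intro a _
    simp only [mul_comm]
    exact CharTwo.add_self_eq_zero _
  · intro a ha _ hga
    have h1 : a.1 = a.2 := by
      have := congrArg Prod.fst hga; simpa using this.symm
    have h2 : a.1 + a.2 = 2 * m + 1 := by
      simpa [Finset.HasAntidiagonal.mem_antidiagonal] using ha
    omega
  · intro a ha
    simp only [Finset.HasAntidiagonal.mem_antidiagonal] at ha ⊢
    omega
  · intro a ha; rfl

private lemma odd_iff_cast_ne (a : ℕ) : Odd a ↔ (a : ZMod 2) ≠ 0 := by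
  rw [Nat.odd_iff, ← Nat.two_dvd_ne_zero]
  exact (not_congr (ZMod.natCast_eq_zero_iff a 2)).symm

/-- The n-th Catalan number is odd if and only if `n = 2^k - 1` for some natural number `k`. -/
theorem catalan_odd_iff (n : ℕ) : Odd (catalan n) ↔ ∃ k : ℕ, n = 2 ^ k - 1 := by
  induction n using Nat.strong_induction_on with
  | _ n ih =>
    match n with
    | 0 => simp [catalan_zero]; exact ⟨0, rfl⟩
    | Nat.succ nn =>
      rcases Nat.even_or_odd nn with ⟨m, hm⟩ | ⟨m, hm⟩
      · -- n = 2m + 1, odd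
        subst hm
        have heq : (m + m).succ = 2 * m + 1 := by omega
        rw [heq]
        have h1 : Odd (catalan (2 * m + 1)) ↔ Odd (catalan m) := by
          rw [odd_iff_cast_ne, odd_iff_cast_ne, catalan_odd_aux_odd]
          simp [pow_eq_zero_iff]
        rw [h1, ih m (by omega)]
        constructor
        · rintro ⟨k, hk⟩
          refine ⟨k + 1, ?_⟩
          have : 1 ≤ 2 ^ k := Nat.one_le_two_pow
          have : 2 ^ (k + 1) = 2 * 2 ^ k := by ring
          omega
        · rintro ⟨k, hk⟩
          match k with
          | 0 => simp at hk
          | j + 1 =>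
            refine ⟨j, ?_⟩
            have h2 : 2 ^ (j + 1) = 2 * 2 ^ j := by ring
            have : 1 ≤ 2 ^ j := Nat.one_le_two_pow
            omega
      · -- n = 2m + 2, even positive
        subst hm
        have heq : (2 * m + 1).succ = 2 * m + 2 := by omega
        rw [heq]
        constructor
        · intro h
          rw [odd_iff_cast_ne, catalan_odd_aux_even] at h
          exact absurd rfl h
        · rintro ⟨k, hk⟩
          match k with
          | 0 => simp at hk
          | j + 1 =>
            exfalso
            have h2 : 2 ^ (j + 1) = 2 * 2 ^ j := by ring
            have : 1 ≤ 2 ^ j := Nat.one_le_two_pow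
            omega
end

section
/- The n-th Catalan number equals the sum over all unlabeled rooted binary tree shapes T with n internal nodes of 2^(n - m(T) - s(T)), where m(T) is the number of internal nodes both of whose children are leaves (maximal nodes) and s(T) is the number of internal nodes whose two children subtrees (as unordered trees) are isomorphic (symmetric nodes). -/
open BinaryTree

/-- Unordered isomorphism of rooted binary trees (forgetting the left/right order). -/
def uisoB : BinaryTree Unit → BinaryTree Unit → Bool
  | BinaryTree.nil, BinaryTree.nil => true
  | BinaryTree.node _ a b, BinaryTree.node _ c d =>
      (uisoB a c && uisoB b d) || (uisoB a d && uisoB b c)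
  | _, _ => false

/-- Number of "maximal" internal nodes: internal nodes both of whose children are leaves. -/
def maxCount : BinaryTree Unit → ℕ
  | BinaryTree.nil => 0
  | BinaryTree.node _ l r =>
      (if l = BinaryTree.nil ∧ r = BinaryTree.nil then 1 else 0) + maxCount l + maxCount r

/-- Number of "symmetric" internal nodes: internal nodes whose two children subtrees are
isomorphic as unordered trees but are not both leaves. -/
def symCount : BinaryTree Unit → ℕ
  | BinaryTree.nil => 0
  | BinaryTree.node _ l r =>
      (if uisoB l r = true ∧ ¬(l = BinaryTree.nil ∧ r = BinaryTree.nil) then 1 else 0)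
        + symCount l + symCount r

lemma uisoB_refl : ∀ t : BinaryTree Unit, uisoB t t = true
  | BinaryTree.nil => rfl
  | BinaryTree.node _ l r => by simp [uisoB, uisoB_refl l, uisoB_refl r]

lemma uisoB_symm : ∀ {a b : BinaryTree Unit}, uisoB a b = true → uisoB b a = true
  | BinaryTree.nil, BinaryTree.nil, _ => rfl
  | BinaryTree.node _ a b, BinaryTree.node _ c d, h => by
      simp only [uisoB, Bool.or_eq_true, Bool.and_eq_true] at h ⊢
      rcases h with ⟨h1, h2⟩ | ⟨h1, h2⟩
      · exact Or.inl ⟨uisoB_symm h1, uisoB_symm h2⟩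
      · exact Or.inr ⟨uisoB_symm h2, uisoB_symm h1⟩
  | BinaryTree.nil, BinaryTree.node _ _ _, h => by simp [uisoB] at h
  | BinaryTree.node _ _ _, BinaryTree.nil, h => by simp [uisoB] at h

lemma uisoB_trans : ∀ {a b c : BinaryTree Unit},
    uisoB a b = true → uisoB b c = true → uisoB a c = true
  | BinaryTree.nil, BinaryTree.nil, BinaryTree.nil, _, _ => rfl
  | BinaryTree.node _ a1 a2, BinaryTree.node _ b1 b2, BinaryTree.node _ c1 c2, h1, h2 => by
      simp only [uisoB, Bool.or_eq_true, Bool.and_eq_true] at h1 h2 ⊢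
      rcases h1 with ⟨p, q⟩ | ⟨p, q⟩ <;> rcases h2 with ⟨u, v⟩ | ⟨u, v⟩
      · exact Or.inl ⟨uisoB_trans p u, uisoB_trans q v⟩
      · exact Or.inr ⟨uisoB_trans p u, uisoB_trans q v⟩
      · exact Or.inr ⟨uisoB_trans p v, uisoB_trans q u⟩
      · exact Or.inl ⟨uisoB_trans p v, uisoB_trans q u⟩
  | BinaryTree.nil, BinaryTree.nil, BinaryTree.node _ _ _, _, h2 => by simp [uisoB] at h2
  | BinaryTree.nil, BinaryTree.node _ _ _, _, h1, _ => by simp [uisoB] at h1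
  | BinaryTree.node _ _ _, BinaryTree.nil, _, h1, _ => by simp [uisoB] at h1
  | BinaryTree.node _ _ _, BinaryTree.node _ _ _, BinaryTree.nil, _, h2 => by simp [uisoB] at h2

lemma numNodes_eq_of_uisoB : ∀ {a b : BinaryTree Unit}, uisoB a b = true →
    a.numNodes = b.numNodes
  | BinaryTree.nil, BinaryTree.nil, _ => rfl
  | BinaryTree.node _ a1 a2, BinaryTree.node _ b1 b2, h => by
      simp only [uisoB, Bool.or_eq_true, Bool.and_eq_true] at h
      rcases h with ⟨p, q⟩ | ⟨p, q⟩ <;>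
        simp only [BinaryTree.numNodes, numNodes_eq_of_uisoB p, numNodes_eq_of_uisoB q] <;>
        omega
  | BinaryTree.nil, BinaryTree.node _ _ _, h => by simp [uisoB] at h
  | BinaryTree.node _ _ _, BinaryTree.nil, h => by simp [uisoB] at h

lemma counts_le : ∀ t : BinaryTree Unit, maxCount t + symCount t ≤ t.numNodes
  | BinaryTree.nil => le_refl 0
  | BinaryTree.node _ l r => by
      have hl := counts_le l
      have hr := counts_le r
      by_cases hnil : l = BinaryTree.nil ∧ r = BinaryTree.nil <;>
        by_cases hu : uisoB l r = true <;>
        simp [maxCount, symCount, BinaryTree.numNodes, hnil, hu] <;>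
        omega

/-- The finset of plane trees unordered-isomorphic to a given tree. -/
def classOf : BinaryTree Unit → Finset (BinaryTree Unit)
  | BinaryTree.nil => {BinaryTree.nil}
  | BinaryTree.node _ l r =>
      ((classOf l ×ˢ classOf r).image fun p => BinaryTree.node () p.1 p.2) ∪
      ((classOf r ×ˢ classOf l).image fun p => BinaryTree.node () p.1 p.2)

lemma mem_classOf : ∀ (U T : BinaryTree Unit), T ∈ classOf U ↔ uisoB T U = true
  | BinaryTree.nil, T => by cases T <;> simp [classOf, uisoB]
  | BinaryTree.node _ l r, T => by
      cases T with
      | nil => simp [classOf, uisoB]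
      | node x a b =>
        simp only [classOf, Finset.mem_union, Finset.mem_image, Finset.mem_product,
          uisoB, Bool.or_eq_true, Bool.and_eq_true, Prod.exists]
        constructor
        · rintro (⟨p, q, ⟨hp, hq⟩, h⟩ | ⟨p, q, ⟨hp, hq⟩, h⟩)
          · injection h with h1 h2 h3
            subst h2; subst h3
            exact Or.inl ⟨(mem_classOf l p).1 hp, (mem_classOf r q).1 hq⟩
          · injection h with h1 h2 h3
            subst h2; subst h3
            exact Or.inr ⟨(mem_classOf r p).1 hp, (mem_classOf l q).1 hq⟩
        · rintro (⟨h1, h2⟩ | ⟨h1, h2⟩)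
          · exact Or.inl ⟨a, b, ⟨(mem_classOf l a).2 h1, (mem_classOf r b).2 h2⟩,
              by cases x; rfl⟩
          · exact Or.inr ⟨a, b, ⟨(mem_classOf r a).2 h1, (mem_classOf l b).2 h2⟩,
              by cases x; rfl⟩

lemma node_inj : Function.Injective
    (fun p : BinaryTree Unit × BinaryTree Unit => BinaryTree.node () p.1 p.2) := by
  rintro ⟨a, b⟩ ⟨c, d⟩ h
  simp_all

lemma card_classOf : ∀ U : BinaryTree Unit,
    (classOf U).card = 2 ^ (U.numNodes - maxCount U - symCount U)
  | BinaryTree.nil => by simp [classOf, BinaryTree.numNodes, maxCount, symCount]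
  | BinaryTree.node _ l r => by
      have hl := card_classOf l
      have hr := card_classOf r
      have hle_l := counts_le l
      have hle_r := counts_le r
      by_cases h : uisoB l r = true
      · have hcls : classOf l = classOf r := by
          ext T
          simp only [mem_classOf]
          exact ⟨fun ht => uisoB_trans ht h, fun ht => uisoB_trans ht (uisoB_symm h)⟩
        have hcard : (classOf (BinaryTree.node () l r)).card
            = (classOf l).card * (classOf r).card := by
          show (((classOf l ×ˢ classOf r).image fun p => BinaryTree.node () p.1 p.2) ∪
            ((classOf r ×ˢ classOf l).image fun p => BinaryTree.node () p.1 p.2)).card = _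
          rw [hcls, Finset.union_self, Finset.card_image_of_injective _ node_inj,
            Finset.card_product, ← hcls]
        rw [hcard, hl, hr, ← pow_add]
        congr 1
        by_cases hnil : l = BinaryTree.nil ∧ r = BinaryTree.nil <;>
          simp only [BinaryTree.numNodes, maxCount, symCount, hnil, h, if_true, if_false,
            not_true, not_false_iff, and_true, and_false, true_and, false_and] <;>
          omega
      · have hnil : ¬(l = BinaryTree.nil ∧ r = BinaryTree.nil) := by
          rintro ⟨rfl, rfl⟩; exact h rfl
        have hdisj : Disjoint
            ((classOf l ×ˢ classOf r).image fun p => BinaryTree.node () p.1 p.2)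
            ((classOf r ×ˢ classOf l).image fun p => BinaryTree.node () p.1 p.2) := by
          rw [Finset.disjoint_left]
          rintro T h1 h2
          simp only [Finset.mem_image, Finset.mem_product, Prod.exists] at h1 h2
          obtain ⟨a, b, ⟨hal, hbr⟩, hT1⟩ := h1
          obtain ⟨a', b', ⟨har, hbl⟩, hT2⟩ := h2
          rw [← hT2] at hT1
          injection hT1 with _ h2 h3
          subst h2; subst h3
          exact h (uisoB_trans (uisoB_symm ((mem_classOf l a).1 hal))
            ((mem_classOf r a).1 har))
        have hcard : (classOf (BinaryTree.node () l r)).card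
            = 2 * ((classOf l).card * (classOf r).card) := by
          show (((classOf l ×ˢ classOf r).image fun p => BinaryTree.node () p.1 p.2) ∪
            ((classOf r ×ˢ classOf l).image fun p => BinaryTree.node () p.1 p.2)).card = _
          rw [Finset.card_union_of_disjoint hdisj,
            Finset.card_image_of_injective _ node_inj,
            Finset.card_image_of_injective _ node_inj,
            Finset.card_product, Finset.card_product]
          ring
        have hexp : (BinaryTree.node () l r).numNodes - maxCount (BinaryTree.node () l r)
            - symCount (BinaryTree.node () l r)
            = (l.numNodes - maxCount l - symCount l)
              + (r.numNodes - maxCount r - symCount r) + 1 := by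
          simp [BinaryTree.numNodes, maxCount, symCount, hnil, h]
          omega
        rw [hcard, hl, hr, hexp, pow_succ, pow_add]
        ring

/-- The n-th Catalan number equals the sum, over a transversal `R` of the unordered-isomorphism
classes of rooted binary trees with `n` internal nodes, of `2 ^ (n - m(T) - s(T))`. -/
theorem catalan_eq_sum_over_shapes (n : ℕ) (R : Finset (BinaryTree Unit))
    (hR : R ⊆ treesOfNumNodesEq n)
    (htrans : ∀ T ∈ treesOfNumNodesEq n, ∃! U, U ∈ R ∧ uisoB T U = true) :
    catalan n = ∑ T ∈ R, 2 ^ (n - maxCount T - symCount T) := by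
  classical
  have hcover : treesOfNumNodesEq n = R.biUnion classOf := by
    ext T
    constructor
    · intro hT
      obtain ⟨U, ⟨hUR, hTU⟩, _⟩ := htrans T hT
      exact Finset.mem_biUnion.2 ⟨U, hUR, (mem_classOf U T).2 hTU⟩
    · intro hT
      obtain ⟨U, hUR, hTU⟩ := Finset.mem_biUnion.1 hT
      have h1 := numNodes_eq_of_uisoB ((mem_classOf U T).1 hTU)
      have hU : U.numNodes = n := BinaryTree.mem_treesOfNumNodesEq.1 (hR hUR)
      rw [BinaryTree.mem_treesOfNumNodesEq]
      omega
  have hdisj : ∀ U ∈ R, ∀ V ∈ R, U ≠ V → Disjoint (classOf U) (classOf V) := by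
    intro U hU V hV hne
    rw [Finset.disjoint_left]
    intro T hTU hTV
    have h1 := (mem_classOf U T).1 hTU
    have h2 := (mem_classOf V T).1 hTV
    have hTn : T ∈ treesOfNumNodesEq n := by
      rw [BinaryTree.mem_treesOfNumNodesEq]
      have := numNodes_eq_of_uisoB h1
      have := BinaryTree.mem_treesOfNumNodesEq.1 (hR hU)
      omega
    obtain ⟨W, _, huniq⟩ := htrans T hTn
    exact hne ((huniq U ⟨hU, h1⟩).trans (huniq V ⟨hV, h2⟩).symm)
  rw [← treesOfNumNodesEq_card_eq_catalan, hcover, Finset.card_biUnion hdisj]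
  refine Finset.sum_congr rfl fun U hU => ?_
  have hn : U.numNodes = n := BinaryTree.mem_treesOfNumNodesEq.1 (hR hU)
  rw [card_classOf U, hn]
end

section
/- Define a bracket on the free vector space over compositions by γ(O_α ⊗ O_β) = O_{α·β} − O_{β·α} + O_{α⊙β} − O_{β⊙α}, where · is concatenation and ⊙ is near-concatenation of compositions. This bracket is antisymmetric and satisfies the Jacobi identity, hence defines a Lie algebra structure. -/
/-- A composition: a nonempty finite sequence of positive integers. -/
def Comp : Type := {l : List ℕ // l ≠ [] ∧ ∀ x ∈ l, 0 < x}

/-- Concatenation of compositions. -/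
def compConcat (a b : Comp) : Comp :=
  ⟨a.1 ++ b.1, fun h => a.2.1 (List.append_eq_nil_iff.mp h).1, by
    intro x hx
    rcases List.mem_append.mp hx with h | h
    · exact a.2.2 x h
    · exact b.2.2 x h⟩

/-- Near-concatenation of compositions:
`(α_1,…,α_k) ⊙ (β_1,…,β_ℓ) = (α_1,…,α_{k-1}, α_k + β_1, β_2,…,β_ℓ)`. -/
def compNearConcat (a b : Comp) : Comp :=
  ⟨a.1.dropLast ++ (a.1.getLast a.2.1 + b.1.head b.2.1) :: b.1.tail, by simp, by
    intro x hx
    rcases List.mem_append.mp hx with h | h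
    · exact a.2.2 x (List.dropLast_subset _ h)
    · rcases List.mem_cons.mp h with h | h
      · subst h
        exact add_pos (a.2.2 _ (List.getLast_mem a.2.1)) (b.2.2 _ (List.head_mem b.2.1))
      · exact b.2.2 x (List.tail_subset _ h)⟩

/-- The bilinear bracket on the free vector space with basis the compositions, determined on
basis elements by `[O_α, O_β] = O_{α·β} − O_{β·α} + O_{α⊙β} − O_{β⊙α}`. -/
noncomputable def opBr (K : Type*) [Field K] (x y : Comp →₀ K) : Comp →₀ K :=
  x.sum fun a ca => y.sum fun b cb =>
    (ca * cb) • (Finsupp.single (compConcat a b) (1 : K) - Finsupp.single (compConcat b a) 1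
      + Finsupp.single (compNearConcat a b) 1 - Finsupp.single (compNearConcat b a) 1)

namespace OpBrAux

@[simp] theorem compConcat_val (a b : Comp) : (compConcat a b).1 = a.1 ++ b.1 := rfl

@[simp] theorem compNearConcat_val (a b : Comp) :
    (compNearConcat a b).1 =
      a.1.dropLast ++ (a.1.getLast a.2.1 + b.1.head b.2.1) :: b.1.tail := rfl

theorem concat_assoc (a b c : Comp) :
    compConcat (compConcat a b) c = compConcat a (compConcat b c) :=
  Subtype.ext (List.append_assoc _ _ _)

theorem near_concat (a b c : Comp) :
    compNearConcat (compConcat a b) c = compConcat a (compNearConcat b c) := by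
  apply Subtype.ext
  have hb : b.1 ≠ [] := b.2.1
  simp [List.dropLast_append_of_ne_nil hb, List.getLast_append_right hb, List.append_assoc]

theorem concat_near (a b c : Comp) :
    compConcat (compNearConcat a b) c = compNearConcat a (compConcat b c) := by
  apply Subtype.ext
  have hb : b.1 ≠ [] := b.2.1
  simp [List.tail_append_of_ne_nil hb, List.head_append_left hb, List.append_assoc]

theorem near_assoc (a b c : Comp) :
    compNearConcat (compNearConcat a b) c = compNearConcat a (compNearConcat b c) := by
  apply Subtype.ext
  simp only [compNearConcat_val]
  obtain ⟨bl, hb, hbpos⟩ := b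
  simp only
  match bl, hb with
  | [hbv], _ =>
      simp [add_assoc]
  | hbv :: b2 :: bt', _ =>
      have hne : ((a.1.getLast a.2.1 + hbv) :: b2 :: bt' : List ℕ) ≠ [] := List.cons_ne_nil _ _
      simp only [List.head_cons, List.tail_cons, List.dropLast_append_of_ne_nil hne,
        List.getLast_append_right hne, List.getLast_cons (List.cons_ne_nil b2 bt'),
        List.dropLast_cons_of_ne_nil (List.cons_ne_nil b2 bt'),
        List.dropLast_cons_of_ne_nil (List.cons_ne_nil hbv (b2 :: bt')),
        List.append_assoc, List.cons_append, List.tail_append_of_ne_nil, List.nil_append]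

/-- Product of two basis elements: `O_alpha * O_beta = O_concat + O_nearconcat`. -/
noncomputable def P (K : Type*) [Field K] (a b : Comp) : Comp →₀ K :=
  Finsupp.single (compConcat a b) 1 + Finsupp.single (compNearConcat a b) 1

/-- The bilinear associative product. -/
noncomputable def M (K : Type*) [Field K] :
    (Comp →₀ K) →ₗ[K] (Comp →₀ K) →ₗ[K] (Comp →₀ K) :=
  Finsupp.lsum K fun a => LinearMap.toSpanSingleton K _
    (Finsupp.lsum K fun b => LinearMap.toSpanSingleton K _ (P K a b))

theorem M_sigma (K : Type*) [Field K] (a b : Comp) :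
    M K (Finsupp.single a 1) (Finsupp.single b 1) = P K a b := by
  rw [M, Finsupp.lsum_single, LinearMap.toSpanSingleton_apply, one_smul,
    Finsupp.lsum_single, LinearMap.toSpanSingleton_apply, one_smul]

theorem M_single_single (K : Type*) [Field K] (a b : Comp) (ca cb : K) :
    M K (Finsupp.single a ca) (Finsupp.single b cb) = (ca * cb) • P K a b := by
  rw [M, Finsupp.lsum_single, LinearMap.toSpanSingleton_apply, LinearMap.smul_apply,
    Finsupp.lsum_single, LinearMap.toSpanSingleton_apply, smul_smul]

theorem M_sigma_assoc (K : Type*) [Field K] (a b c : Comp) :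
    M K (M K (Finsupp.single a (1 : K)) (Finsupp.single b 1)) (Finsupp.single c 1) =
    M K (Finsupp.single a 1) (M K (Finsupp.single b 1) (Finsupp.single c 1)) := by
  rw [M_sigma, M_sigma, P, P, map_add, LinearMap.add_apply, map_add,
    M_sigma, M_sigma, M_sigma, M_sigma, P, P, P, P,
    concat_assoc, near_concat, concat_near, near_assoc]
  abel

theorem M_assoc (K : Type*) [Field K] (x y z : Comp →₀ K) :
    M K (M K x y) z = M K x (M K y z) := by
  induction x using Finsupp.induction_linear with
  | zero => simp
  | add f g hf hg => simp [map_add, LinearMap.add_apply, hf, hg]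
  | single a ca =>
    induction y using Finsupp.induction_linear with
    | zero => simp
    | add f g hf hg => simp [map_add, LinearMap.add_apply, hf, hg]
    | single b cb =>
      induction z using Finsupp.induction_linear with
      | zero => simp
      | add f g hf hg => simp [map_add, hf, hg]
      | single c cc =>
        have ha : Finsupp.single a ca = ca • Finsupp.single a (1 : K) := by
          rw [Finsupp.smul_single, smul_eq_mul, mul_one]
        have hb : Finsupp.single b cb = cb • Finsupp.single b (1 : K) := by
          rw [Finsupp.smul_single, smul_eq_mul, mul_one]
        have hc : Finsupp.single c cc = cc • Finsupp.single c (1 : K) := by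
          rw [Finsupp.smul_single, smul_eq_mul, mul_one]
        rw [ha, hb, hc]
        simp only [map_smul, LinearMap.smul_apply, M_sigma_assoc]

theorem M_apply (K : Type*) [Field K] (u v : Comp →₀ K) :
    M K u v = u.sum fun a ca => v.sum fun b cb => (ca * cb) • P K a b := by
  rw [M, Finsupp.lsum_apply, LinearMap.finsupp_sum_apply]
  apply Finsupp.sum_congr
  intro a _
  rw [LinearMap.toSpanSingleton_apply, LinearMap.smul_apply, Finsupp.lsum_apply,
    Finsupp.smul_sum]
  apply Finsupp.sum_congr
  intro b _
  rw [LinearMap.toSpanSingleton_apply, smul_smul]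

theorem opBr_eq (K : Type*) [Field K] (x y : Comp →₀ K) :
    opBr K x y = M K x y - M K y x := by
  have key : opBr K x y =
      (x.sum fun a ca => y.sum fun b cb => (ca * cb) • P K a b)
        - (x.sum fun a ca => y.sum fun b cb => (ca * cb) • P K b a) := by
    rw [← Finsupp.sum_sub]
    apply Finsupp.sum_congr
    intro a _
    rw [← Finsupp.sum_sub]
    apply Finsupp.sum_congr
    intro b _
    rw [← smul_sub]
    congr 1
    rw [P, P]
    abel
  rw [key, M_apply, M_apply, Finsupp.sum_comm x y fun a ca b cb => (ca * cb) • P K b a]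
  congr 1
  apply Finsupp.sum_congr
  intro b _
  apply Finsupp.sum_congr
  intro a _
  rw [mul_comm]

end OpBrAux

/-- Over a field of characteristic zero, the bracket
`[O_α, O_β] = O_{α·β} − O_{β·α} + O_{α⊙β} − O_{β⊙α}` on the free vector space over
compositions is antisymmetric and satisfies the Jacobi identity, hence defines a Lie
algebra. -/
theorem opBr_lie (K : Type*) [Field K] [CharZero K] :
    (∀ x y : Comp →₀ K, opBr K x y = - opBr K y x) ∧
    (∀ x y z : Comp →₀ K,
      opBr K x (opBr K y z) + opBr K y (opBr K z x) + opBr K z (opBr K x y) = 0) := by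
  open OpBrAux in
  constructor
  · intro x y
    rw [opBr_eq, opBr_eq]
    abel
  · intro x y z
    simp only [opBr_eq, map_sub, LinearMap.sub_apply, M_assoc]
    abel
end

section
/- For a rooted binary tree T with n internal nodes, labeled by the binary search labeling, performing a tree rotation at an internal edge between nodes i (child) and j (parent) changes Loday's vertex v(T) = (l_1 r_1, ..., l_n r_n) by a vector of the form c(e_i − e_j) or c(e_j − e_i) for a positive integer c; in the case i is a left child of j, v(T') − v(T) = l_i r_j (e_i − e_j), where l_k and r_k are the numbers of leaves in the left and right subtrees of node k. -/
open Tree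

/-- Loday's vertex of a rooted binary tree, as the list of coordinates `l_k * r_k` of the
internal nodes `k`, listed in in-order (binary search) order: the `k`-th entry is the product
of the numbers of leaves in the left and right subtrees of the `k`-th internal node. -/
def lodayList : Tree Unit → List ℕ
  | BinaryTree.nil => []
  | BinaryTree.node _ l r => lodayList l ++ (l.numLeaves * r.numLeaves) :: lodayList r

/-- One tree rotation at some internal edge: replace a local subtree `(x∧y)∧z` by
`x∧(y∧z)`. -/
inductive Rot : Tree Unit → Tree Unit → Prop
  | here (x y z : Tree Unit) :
      Rot (Tree.node () (Tree.node () x y) z) (Tree.node () x (Tree.node () y z))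
  | left {l l' : Tree Unit} (r : Tree Unit) : Rot l l' → Rot (Tree.node () l r) (Tree.node () l' r)
  | right (l : Tree Unit) {r r' : Tree Unit} : Rot r r' → Rot (Tree.node () l r) (Tree.node () l r')

lemma lodayList_length (t : Tree Unit) : (lodayList t).length = t.numNodes := by
  induction t with
  | nil => rfl
  | node _ l r ihl ihr => simp [lodayList, Tree.numNodes, ihl, ihr]; omega

lemma getD_append_cons (A : List ℕ) (b : ℕ) (B : List ℕ) (k : ℕ) :
    (A ++ b :: B).getD k 0 =
      if k < A.length then A.getD k 0
      else if k = A.length then b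
      else B.getD (k - A.length - 1) 0 := by
  split
  · exact List.getD_append _ _ _ _ ‹_›
  · split
    · subst ‹_›; rw [List.getD_append_right _ _ _ _ le_rfl]; simp
    · rw [List.getD_append_right _ _ _ _ (by omega)]
      have e : k - A.length = (k - A.length - 1) + 1 := by omega
      rw [e, List.getD_cons_succ]
      simp

lemma rot_numLeaves {T T' : Tree Unit} (h : Rot T T') : T'.numLeaves = T.numLeaves := by
  induction h with
  | here x y z => simp [Tree.numLeaves]; omega
  | left r _ ih => simp [Tree.numLeaves, ih]
  | right l _ ih => simp [Tree.numLeaves, ih]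

lemma key (x y z : Tree Unit) (k : ℕ) :
    ((lodayList (Tree.node () x (Tree.node () y z))).getD k 0 : ℤ) -
      ((lodayList (Tree.node () (Tree.node () x y) z)).getD k 0 : ℤ) =
    (x.numLeaves * z.numLeaves : ℤ) *
      ((if k = x.numNodes then 1 else 0) -
        (if k = x.numNodes + y.numNodes + 1 then 1 else 0)) := by
  have hx := lodayList_length x
  have hy := lodayList_length y
  have h1 : lodayList (Tree.node () (Tree.node () x y) z) =
      lodayList x ++ (x.numLeaves * y.numLeaves) ::
        (lodayList y ++ ((x.numLeaves + y.numLeaves) * z.numLeaves) :: lodayList z) := by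
    simp [lodayList, Tree.numLeaves]
  have h2 : lodayList (Tree.node () x (Tree.node () y z)) =
      lodayList x ++ (x.numLeaves * (y.numLeaves + z.numLeaves)) ::
        (lodayList y ++ (y.numLeaves * z.numLeaves) :: lodayList z) := by
    simp [lodayList, Tree.numLeaves]
  rw [h1, h2, getD_append_cons, getD_append_cons, getD_append_cons, getD_append_cons, hx, hy]
  split_ifs <;> first | omega | (push_cast; ring)

lemma rot_numNodes {T T' : Tree Unit} (h : Rot T T') : T'.numNodes = T.numNodes := by
  have := rot_numLeaves h
  simp only [Tree.numLeaves, Tree.numNodes, BinaryTree.numLeaves_eq_numNodes_succ] at this ⊢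
  omega

/-- A tree rotation changes Loday's vertex `v(T) = (l_1 r_1, …, l_n r_n)` (coordinates read
off via the in-order labeling) by a vector `c (e_i - e_j)` for two distinct internal node
labels `i, j` and a positive integer `c`; moreover for the rotation `(x∧y)∧z ↦ x∧(y∧z)`
(where the child node `i = x∧y` is a left child of its parent `j`), the change is exactly
`l_i r_j (e_i - e_j)`, where `l_i = numLeaves x` and `r_j = numLeaves z`. -/
theorem loday_vertex_rotation :
    (∀ T T' : Tree Unit, Rot T T' →
      ∃ (i j : ℕ) (c : ℕ), i < T.numNodes ∧ j < T.numNodes ∧ i ≠ j ∧ 0 < c ∧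
        ∀ k : ℕ, ((lodayList T').getD k 0 : ℤ) - ((lodayList T).getD k 0 : ℤ) =
          (c : ℤ) * ((if k = i then 1 else 0) - (if k = j then 1 else 0))) ∧
    (∀ x y z : Tree Unit,
      ∀ k : ℕ,
        ((lodayList (Tree.node () x (Tree.node () y z))).getD k 0 : ℤ) -
          ((lodayList (Tree.node () (Tree.node () x y) z)).getD k 0 : ℤ) =
        (x.numLeaves * z.numLeaves : ℤ) *
          ((if k = x.numNodes then 1 else 0) -
            (if k = x.numNodes + y.numNodes + 1 then 1 else 0))) := by
  constructor
  · intro T T' h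
    induction h with
    | here x y z =>
      refine ⟨x.numNodes, x.numNodes + y.numNodes + 1, x.numLeaves * z.numLeaves,
        by simp [Tree.numNodes]; omega, by simp [Tree.numNodes], by omega,
        Nat.mul_pos x.numLeaves_pos z.numLeaves_pos, ?_⟩
      intro k
      push_cast
      exact key x y z k
    | @left l l' r hrot ih =>
      obtain ⟨i, j, c, hi, hj, hij, hc, hk⟩ := ih
      have hnn := rot_numNodes hrot
      have hnl := rot_numLeaves hrot
      have hlen := lodayList_length l
      have hlen' := lodayList_length l'
      refine ⟨i, j, c, by simp [Tree.numNodes] at hi ⊢; omega, by simp [Tree.numNodes] at hj ⊢; omega, hij, hc, ?_⟩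
      intro k
      show ((lodayList l' ++ _ :: lodayList r).getD k 0 : ℤ) -
        ((lodayList l ++ _ :: lodayList r).getD k 0 : ℤ) = _
      rw [getD_append_cons, getD_append_cons, hlen, hlen', hnn]
      by_cases hkl : k < l.numNodes
      · simp only [hkl, if_pos]
        exact hk k
      · have h0 : ((lodayList l').getD k 0 : ℤ) - ((lodayList l).getD k 0 : ℤ) = 0 := by
          rw [List.getD_eq_default _ _ (by omega), List.getD_eq_default _ _ (by omega)]
          simp
        rw [← hk k, h0]
        simp only [hkl, if_neg, if_false]
        split
        · rw [show BinaryTree.numLeaves l' = BinaryTree.numLeaves l from hnl]; ring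
        · ring
    | @right l r r' hrot ih =>
      obtain ⟨i, j, c, hi, hj, hij, hc, hk⟩ := ih
      have hnn := rot_numNodes hrot
      have hnl := rot_numLeaves hrot
      have hlen := lodayList_length l
      refine ⟨i + l.numNodes + 1, j + l.numNodes + 1, c,
        by simp [Tree.numNodes] at hi ⊢; omega, by simp [Tree.numNodes] at hj ⊢; omega, by omega, hc, ?_⟩
      intro k
      show ((lodayList l ++ _ :: lodayList r').getD k 0 : ℤ) -
        ((lodayList l ++ _ :: lodayList r).getD k 0 : ℤ) = _
      rw [getD_append_cons, getD_append_cons, hlen]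
      by_cases hkl : k < l.numNodes
      · simp only [hkl, if_pos]
        have e1 : ¬ (k = i + l.numNodes + 1) := by omega
        have e2 : ¬ (k = j + l.numNodes + 1) := by omega
        rw [if_neg e1, if_neg e2]
        ring
      · by_cases hke : k = l.numNodes
        · have e1 : ¬ (k = i + l.numNodes + 1) := by omega
          have e2 : ¬ (k = j + l.numNodes + 1) := by omega
          rw [if_neg hkl, if_neg hkl, if_pos hke, if_pos hke, if_neg e1, if_neg e2, show BinaryTree.numLeaves r' = BinaryTree.numLeaves r from hnl]
          ring
        · have e1 : (k = i + l.numNodes + 1) ↔ (k - l.numNodes - 1 = i) := by omega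
          have e2 : (k = j + l.numNodes + 1) ↔ (k - l.numNodes - 1 = j) := by omega
          rw [if_neg hkl, if_neg hkl, if_neg hke, if_neg hke]
          simp only [e1, e2]
          exact hk (k - l.numNodes - 1)
  · exact key
end
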